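/- Let k ≥ 1 and n ≥ 2k + 5 be integers. The 3-graph S₃⁺(n,k) contains no linear path of length 2k + 2, and its minimum degree satisfies δ₁(S₃⁺(n,k)) = kn − k²/2 − 3k/2 + 1. -/
import Mathlib


/-- The degree of a vertex `v` in a hypergraph with edge set `E`:
the number of edges containing `v`. -/
def hdegree {V : Type*} [DecidableEq V] (E : Finset (Finset V)) (v : V) : ℕ :=
  (E.filter (fun e => v ∈ e)).card

/-- The hypergraph with edge set `E` contains a linear path of length `k`:
a collection of `k` (distinct) edges `e₁, …, e_k` such that `|eᵢ ∩ e_j| = 1`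
if `|i - j| = 1` and `eᵢ ∩ e_j = ∅` otherwise. -/
def HasLinearPath {V : Type*} [DecidableEq V] (E : Finset (Finset V)) (k : ℕ) : Prop :=
  ∃ f : Fin k → Finset V, Function.Injective f ∧ (∀ i, f i ∈ E) ∧
    ∀ i j : Fin k, i ≠ j →
      (((i : ℕ) + 1 = j ∨ (j : ℕ) + 1 = i) → (f i ∩ f j).card = 1) ∧
      (¬((i : ℕ) + 1 = j ∨ (j : ℕ) + 1 = i) → f i ∩ f j = ∅)

/-- The edge set of `S₃⁺(n,k)`: vertices are `Fin n`, with `A` the first `k` vertices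
and `B` the remaining `n - k` vertices.  The edges are all 3-element subsets meeting `A`
(these are the edges of `S₃(n,k)`), together with the edges of a copy of `C₃(n-k, 2)`
embedded in `B`, namely all 3-element subsets of `B` containing the 2-element set
`S = {k, k+1} ⊆ B`.  (A 3-set containing the vertices `k` and `k+1` either meets `A`,
or is a 3-subset of `B` containing `S`, so the condition below describes exactly
this edge set.) -/
def S3plus (n k : ℕ) : Finset (Finset (Fin n)) :=
  Finset.univ.filter (fun e => e.card = 3 ∧
    ((∃ v ∈ e, (v : ℕ) < k) ∨ ((∃ v ∈ e, (v : ℕ) = k) ∧ ∃ v ∈ e, (v : ℕ) = k + 1)))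

open Finset

lemma card_val_lt (n k : ℕ) (hk : k ≤ n) :
    (Finset.univ.filter (fun u : Fin n => (u : ℕ) < k)).card = k := by
  have h : (Finset.univ.filter (fun u : Fin n => (u : ℕ) < k)).card
      = (Finset.univ : Finset (Fin k)).card := by
    refine Finset.card_bij' (fun (u : Fin n) hu => (⟨(u : ℕ), (Finset.mem_filter.mp hu).2⟩ : Fin k))
        (fun (u : Fin k) _ => (⟨(u : ℕ), lt_of_lt_of_le u.isLt hk⟩ : Fin n)) ?_ ?_ ?_ ?_
    · intro a ha; exact Finset.mem_univ _
    · intro a _; simp [a.isLt]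
    · intro a ha; simp
    · intro a ha; simp
  simpa using h

lemma card_val_not_lt (n k : ℕ) (hk : k ≤ n) :
    (Finset.univ.filter (fun u : Fin n => ¬ (u : ℕ) < k)).card = n - k := by
  have h := Finset.card_filter_add_card_filter_not
    (s := (Finset.univ : Finset (Fin n))) (fun u : Fin n => (u : ℕ) < k)
  rw [card_val_lt n k hk, Finset.card_univ, Fintype.card_fin] at h
  simp only [not_lt] at h ⊢
  omega

lemma card_filter_three (n : ℕ) (s : Finset (Fin n)) (v : Fin n) (hv : v ∈ s) :
    (Finset.univ.filter (fun e : Finset (Fin n) => e.card = 3 ∧ v ∈ e ∧ e ⊆ s)).card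
      = (s.card - 1).choose 2 := by
  rw [← Finset.card_erase_of_mem hv, ← Finset.card_powersetCard]
  refine Finset.card_bij' (fun e _ => e.erase v) (fun t _ => insert v t) ?_ ?_ ?_ ?_
  · intro e he
    obtain ⟨-, h3, hve, hes⟩ := Finset.mem_filter.mp he
    refine Finset.mem_powersetCard.mpr ⟨fun x hx => ?_, ?_⟩
    · rcases Finset.mem_erase.mp hx with ⟨hxv, hxe⟩
      exact Finset.mem_erase.mpr ⟨hxv, hes hxe⟩
    · rw [Finset.card_erase_of_mem hve, h3]
  · intro t ht
    obtain ⟨hts, htc⟩ := Finset.mem_powersetCard.mp ht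
    have hvt : v ∉ t := fun h => (Finset.mem_erase.mp (hts h)).1 rfl
    refine Finset.mem_filter.mpr ⟨Finset.mem_univ _, ?_, Finset.mem_insert_self _ _, ?_⟩
    · rw [Finset.card_insert_of_notMem hvt, htc]
    · intro x hx
      rcases Finset.mem_insert.mp hx with rfl | hx
      · exact hv
      · exact Finset.mem_of_mem_erase (hts hx)
  · intro e he
    exact Finset.insert_erase (Finset.mem_filter.mp he).2.2.1
  · intro t ht
    obtain ⟨hts, _⟩ := Finset.mem_powersetCard.mp ht
    have hvt : v ∉ t := fun h => (Finset.mem_erase.mp (hts h)).1 rfl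
    exact Finset.erase_insert hvt

lemma hdeg_eq (n k : ℕ) (v : Fin n) :
    hdegree (S3plus n k) v =
      (Finset.univ.filter (fun e : Finset (Fin n) =>
        (e.card = 3 ∧ ((∃ u ∈ e, (u : ℕ) < k) ∨
          ((∃ u ∈ e, (u : ℕ) = k) ∧ ∃ u ∈ e, (u : ℕ) = k + 1))) ∧ v ∈ e)).card := by
  unfold hdegree S3plus; rw [Finset.filter_filter]

lemma deg_A (n k : ℕ) (v : Fin n) (hv : (v : ℕ) < k) :
    hdegree (S3plus n k) v = (n - 1).choose 2 := by
  rw [hdeg_eq]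
  have : (Finset.univ.filter (fun e : Finset (Fin n) =>
        (e.card = 3 ∧ ((∃ u ∈ e, (u : ℕ) < k) ∨
          ((∃ u ∈ e, (u : ℕ) = k) ∧ ∃ u ∈ e, (u : ℕ) = k + 1))) ∧ v ∈ e))
      = (Finset.univ.filter (fun e : Finset (Fin n) => e.card = 3 ∧ v ∈ e ∧ e ⊆ univ)) := by
    apply Finset.filter_congr
    intro e _
    constructor
    · rintro ⟨⟨h3, -⟩, hve⟩; exact ⟨h3, hve, Finset.subset_univ e⟩
    · rintro ⟨h3, hve, -⟩; exact ⟨⟨h3, Or.inl ⟨v, hve, hv⟩⟩, hve⟩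
  rw [this, card_filter_three n univ v (Finset.mem_univ v), Finset.card_univ, Fintype.card_fin]

lemma deg_B (n k : ℕ) (hn : 2 * k + 5 ≤ n) (v : Fin n) (hv : ¬ (v : ℕ) < k) :
    hdegree (S3plus n k) v + (n - k - 1).choose 2 =
      (n - 1).choose 2 + (if (v : ℕ) = k ∨ (v : ℕ) = k + 1 then n - k - 2 else 1) := by
  have hkn : k + 1 < n := by omega
  set sk : Fin n := ⟨k, by omega⟩ with hsk_def
  set sk1 : Fin n := ⟨k + 1, by omega⟩ with hsk1_def
  have hne : sk ≠ sk1 := by simp [hsk_def, hsk1_def, Fin.ext_iff]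
  have hSiff : ∀ e : Finset (Fin n),
      ((∃ u ∈ e, (u : ℕ) = k) ∧ ∃ u ∈ e, (u : ℕ) = k + 1) ↔ (sk ∈ e ∧ sk1 ∈ e) := by
    intro e
    constructor
    · rintro ⟨⟨u, hu, hu'⟩, ⟨w, hw, hw'⟩⟩
      constructor
      · have : u = sk := Fin.ext hu'
        rwa [← this]
      · have : w = sk1 := Fin.ext hw'
        rwa [← this]
    · rintro ⟨h1, h2⟩; exact ⟨⟨sk, h1, rfl⟩, ⟨sk1, h2, rfl⟩⟩
  have hBcard0 := card_val_not_lt n k (by omega)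
  set B : Finset (Fin n) := Finset.univ.filter (fun u : Fin n => ¬ (u : ℕ) < k) with hB_def
  have hBcard : B.card = n - k := hBcard0
  set W : Finset (Finset (Fin n)) :=
    Finset.univ.filter (fun e : Finset (Fin n) => e.card = 3 ∧ v ∈ e) with hW_def
  set X : Finset (Finset (Fin n)) :=
    W.filter (fun e : Finset (Fin n) => ∃ u ∈ e, (u : ℕ) < k) with hX_def
  set Z : Finset (Finset (Fin n)) :=
    W.filter (fun e : Finset (Fin n) => ¬ ∃ u ∈ e, (u : ℕ) < k) with hZ_def
  set Y : Finset (Finset (Fin n)) :=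
    W.filter (fun e : Finset (Fin n) =>
      (¬ ∃ u ∈ e, (u : ℕ) < k) ∧ sk ∈ e ∧ sk1 ∈ e) with hY_def
  -- Step 1 : hdegree = X.card + Y.card
  have hstep1 : hdegree (S3plus n k) v = X.card + Y.card := by
    rw [hdeg_eq]
    have hXY : (Finset.univ.filter (fun e : Finset (Fin n) =>
        (e.card = 3 ∧ ((∃ u ∈ e, (u : ℕ) < k) ∨
          ((∃ u ∈ e, (u : ℕ) = k) ∧ ∃ u ∈ e, (u : ℕ) = k + 1))) ∧ v ∈ e)) = X ∪ Y := by
      ext e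
      simp only [hX_def, hY_def, hW_def, Finset.mem_filter, Finset.mem_union,
        Finset.mem_univ, true_and]
      rw [hSiff e]
      constructor
      · rintro ⟨⟨h3, hAS⟩, hve⟩
        by_cases hA : ∃ u ∈ e, (u : ℕ) < k
        · exact Or.inl ⟨⟨h3, hve⟩, hA⟩
        · rcases hAS with hA' | hS
          · exact absurd hA' hA
          · exact Or.inr ⟨⟨h3, hve⟩, hA, hS⟩
      · rintro (⟨⟨h3, hve⟩, hA⟩ | ⟨⟨h3, hve⟩, hA, hS⟩)
        · exact ⟨⟨h3, Or.inl hA⟩, hve⟩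
        · exact ⟨⟨h3, Or.inr hS⟩, hve⟩
    rw [hXY, Finset.card_union_of_disjoint]
    rw [Finset.disjoint_left]
    intro e he he'
    rw [hX_def, Finset.mem_filter] at he
    rw [hY_def, Finset.mem_filter] at he'
    exact he'.2.1 he.2
  -- Step 2 : X.card + Z.card = (n-1).choose 2
  have hstep2 : X.card + Z.card = (n - 1).choose 2 := by
    have h1 : X.card + Z.card = W.card :=
      Finset.card_filter_add_card_filter_not _
    rw [h1, hW_def]
    have h2 : (Finset.univ.filter (fun e : Finset (Fin n) => e.card = 3 ∧ v ∈ e))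
        = (Finset.univ.filter (fun e : Finset (Fin n) => e.card = 3 ∧ v ∈ e ∧ e ⊆ univ)) := by
      apply Finset.filter_congr; intro e _
      simp [Finset.subset_univ]
    rw [h2, card_filter_three n univ v (Finset.mem_univ v), Finset.card_univ, Fintype.card_fin]
  -- Step 3: Z.card  = (n-k-1).choose 2
  have hstep3 : Z.card = (n - k - 1).choose 2 := by
    have h2 : Z = (Finset.univ.filter
        (fun e : Finset (Fin n) => e.card = 3 ∧ v ∈ e ∧ e ⊆ B)) := by
      rw [hZ_def, hW_def, Finset.filter_filter]
      apply Finset.filter_congr; intro e _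
      constructor
      · rintro ⟨⟨h3, hve⟩, hA⟩
        refine ⟨h3, hve, fun u hu => ?_⟩
        rw [hB_def, Finset.mem_filter]
        exact ⟨Finset.mem_univ _, fun h => hA ⟨u, hu, h⟩⟩
      · rintro ⟨h3, hve, hsub⟩
        refine ⟨⟨h3, hve⟩, ?_⟩
        rintro ⟨u, hu, hlt⟩
        exact (Finset.mem_filter.mp (hsub hu)).2 hlt
    have hvB : v ∈ B := by rw [hB_def, Finset.mem_filter]; exact ⟨Finset.mem_univ _, hv⟩
    rw [h2, card_filter_three n B v hvB, hBcard]
  -- Step 4 : Y.card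
  have hskB : sk ∈ B := by rw [hB_def, Finset.mem_filter]; simp [hsk_def]
  have hsk1B : sk1 ∈ B := by rw [hB_def, Finset.mem_filter]; simp [hsk1_def]
  have hstep4 : Y.card = if (v : ℕ) = k ∨ (v : ℕ) = k + 1 then n - k - 2 else 1 := by
    by_cases hcase : (v : ℕ) = k ∨ (v : ℕ) = k + 1
    · rw [if_pos hcase]
      have hvmem : v = sk ∨ v = sk1 := by
        rcases hcase with h | h
        · exact Or.inl (Fin.ext h)
        · exact Or.inr (Fin.ext h)
      set W2 : Finset (Fin n) := (B.erase sk1).erase sk with hW2_def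
      have hW2card : W2.card = n - k - 2 := by
        rw [hW2_def, Finset.card_erase_of_mem (Finset.mem_erase.mpr ⟨hne, hskB⟩),
          Finset.card_erase_of_mem hsk1B, hBcard]
        omega
      have hYim : Y = W2.image (fun w => insert sk (insert sk1 {w})) := by
        ext e
        constructor
        · intro he
          simp only [hY_def, hW_def, Finset.mem_filter, Finset.mem_univ, true_and] at he
          obtain ⟨⟨h3, hve⟩, hA, hske, hsk1e⟩ := he
          have h1 : sk1 ∈ e.erase sk := Finset.mem_erase.mpr ⟨hne.symm, hsk1e⟩
          have hcardt : ((e.erase sk).erase sk1).card = 1 := by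
            rw [Finset.card_erase_of_mem h1, Finset.card_erase_of_mem hske, h3]
          obtain ⟨w, hw⟩ := Finset.card_eq_one.mp hcardt
          have hwmem : w ∈ (e.erase sk).erase sk1 := by
            rw [hw]; exact Finset.mem_singleton_self w
          have hwe : w ∈ e := Finset.mem_of_mem_erase (Finset.mem_of_mem_erase hwmem)
          have hwsk1 : w ≠ sk1 := (Finset.mem_erase.mp hwmem).1
          have hwsk : w ≠ sk := (Finset.mem_erase.mp (Finset.mem_of_mem_erase hwmem)).1
          refine Finset.mem_image.mpr ⟨w, ?_, ?_⟩
          · rw [hW2_def]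
            refine Finset.mem_erase.mpr ⟨hwsk, Finset.mem_erase.mpr ⟨hwsk1, ?_⟩⟩
            rw [hB_def, Finset.mem_filter]
            exact ⟨Finset.mem_univ _, fun h => hA ⟨w, hwe, h⟩⟩
          · rw [← hw, Finset.insert_erase h1, Finset.insert_erase hske]
        · intro he
          obtain ⟨w, hwW2, rfl⟩ := Finset.mem_image.mp he
          have hwW2' : w ∈ W2 := hwW2
          rw [hW2_def, Finset.mem_erase, Finset.mem_erase] at hwW2'
          obtain ⟨hwsk, hwsk1, hwB⟩ := hwW2'
          have hwk : ¬ (w : ℕ) < k := (Finset.mem_filter.mp hwB).2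
          have h3 : (insert sk (insert sk1 ({w} : Finset (Fin n)))).card = 3 := by
            rw [Finset.card_insert_of_notMem, Finset.card_insert_of_notMem,
              Finset.card_singleton]
            · simp [hwsk1.symm]
            · simp [hne, hwsk.symm]
          simp only [hY_def, hW_def, Finset.mem_filter, Finset.mem_univ, true_and]
          refine ⟨⟨h3, ?_⟩, ?_, by simp, by simp⟩
          · rcases hvmem with h | h <;> rw [h] <;> simp
          · rintro ⟨u, hu, hlt⟩
            simp only [Finset.mem_insert, Finset.mem_singleton] at hu
            rcases hu with rfl | rfl | rfl
            · simp [hsk_def] at hlt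
            · simp [hsk1_def] at hlt
            · exact hwk hlt
      rw [hYim, Finset.card_image_of_injOn, hW2card]
      intro w hwmem w' hw'mem heq
      have heq' : insert sk (insert sk1 ({w} : Finset (Fin n)))
          = insert sk (insert sk1 ({w'} : Finset (Fin n))) := heq
      have hmem2 : w ∈ insert sk (insert sk1 ({w'} : Finset (Fin n))) := by
        rw [← heq']; simp
      have hwmem' : w ∈ W2 := Finset.mem_coe.mp hwmem
      rw [hW2_def, Finset.mem_erase, Finset.mem_erase] at hwmem'
      simp only [Finset.mem_insert, Finset.mem_singleton] at hmem2
      rcases hmem2 with rfl | rfl | rfl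
      · exact absurd rfl hwmem'.1
      · exact absurd rfl hwmem'.2.1
      · rfl
    · rw [if_neg hcase]
      push_neg at hcase
      have hvsk : v ≠ sk := fun h => hcase.1 (by rw [h])
      have hvsk1 : v ≠ sk1 := fun h => hcase.2 (by rw [h])
      have hYsing : Y = {insert sk (insert sk1 ({v} : Finset (Fin n)))} := by
        ext e
        rw [Finset.mem_singleton]
        simp only [hY_def, hW_def, Finset.mem_filter, Finset.mem_univ, true_and]
        constructor
        · rintro ⟨⟨h3, hve⟩, hA, hske, hsk1e⟩
          have hsub : insert sk (insert sk1 ({v} : Finset (Fin n))) ⊆ e := by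
            intro x hx
            simp only [Finset.mem_insert, Finset.mem_singleton] at hx
            rcases hx with rfl | rfl | rfl
            exacts [hske, hsk1e, hve]
          have hc : (insert sk (insert sk1 ({v} : Finset (Fin n)))).card = 3 := by
            rw [Finset.card_insert_of_notMem, Finset.card_insert_of_notMem,
              Finset.card_singleton]
            · simp [hvsk1.symm]
            · simp [hne, hvsk.symm]
          exact (Finset.eq_of_subset_of_card_le hsub (by omega)).symm
        · rintro rfl
          have hc : (insert sk (insert sk1 ({v} : Finset (Fin n)))).card = 3 := by
            rw [Finset.card_insert_of_notMem, Finset.card_insert_of_notMem,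
              Finset.card_singleton]
            · simp [hvsk1.symm]
            · simp [hne, hvsk.symm]
          refine ⟨⟨hc, by simp⟩, ?_, by simp, by simp⟩
          rintro ⟨u, hu, hlt⟩
          simp only [Finset.mem_insert, Finset.mem_singleton] at hu
          rcases hu with rfl | rfl | rfl
          · simp [hsk_def] at hlt
          · simp [hsk1_def] at hlt
          · exact hv hlt
      rw [hYsing, Finset.card_singleton]
  omega

lemma no_path (k n : ℕ) (hn : 2 * k + 5 ≤ n) :
    ¬ HasLinearPath (S3plus n k) (2 * k + 2) := by
  classical
  rintro ⟨f, hinj, hmem, hpath⟩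
  have hkn : k + 1 < n := by omega
  set sk : Fin n := ⟨k, by omega⟩ with hsk_def
  set sk1 : Fin n := ⟨k + 1, by omega⟩ with hsk1_def
  have hne : sk ≠ sk1 := by simp [hsk_def, hsk1_def, Fin.ext_iff]
  have hadj : ∀ i j : Fin (2 * k + 2), i ≠ j → ∀ w : Fin n, w ∈ f i → w ∈ f j →
      ((i : ℕ) + 1 = j ∨ (j : ℕ) + 1 = i) := by
    intro i j hij w hwi hwj
    by_contra h
    have hw : w ∈ f i ∩ f j := Finset.mem_inter.mpr ⟨hwi, hwj⟩
    rw [(hpath i j hij).2 h] at hw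
    exact absurd hw (Finset.notMem_empty w)
  set T : Finset (Fin (2 * k + 2)) :=
    Finset.univ.filter (fun i => ∃ u ∈ f i, (u : ℕ) < k) with hT_def
  have hTc : (Finset.univ.filter
      (fun i : Fin (2 * k + 2) => ¬ ∃ u ∈ f i, (u : ℕ) < k)).card ≤ 1 := by
    rw [Finset.card_le_one]
    intro i hi j hj
    by_contra hij
    have hget : ∀ m : Fin (2 * k + 2),
        m ∈ Finset.univ.filter (fun i : Fin (2 * k + 2) => ¬ ∃ u ∈ f i, (u : ℕ) < k) →
        sk ∈ f m ∧ sk1 ∈ f m := by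
      intro m hm
      rw [Finset.mem_filter] at hm
      have hmem' := hmem m
      rw [S3plus, Finset.mem_filter] at hmem'
      rcases hmem'.2.2 with hA | ⟨⟨u, hu, hu'⟩, ⟨w, hw, hw'⟩⟩
      · exact absurd hA hm.2
      · constructor
        · have : u = sk := Fin.ext hu'
          rwa [← this]
        · have : w = sk1 := Fin.ext hw'
          rwa [← this]
    obtain ⟨hski, hsk1i⟩ := hget i hi
    obtain ⟨hskj, hsk1j⟩ := hget j hj
    have hlt : 1 < (f i ∩ f j).card := Finset.one_lt_card.mpr
      ⟨sk, Finset.mem_inter.mpr ⟨hski, hskj⟩, sk1, Finset.mem_inter.mpr ⟨hsk1i, hsk1j⟩, hne⟩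
    by_cases hd : (i : ℕ) + 1 = j ∨ (j : ℕ) + 1 = i
    · rw [(hpath i j hij).1 hd] at hlt; omega
    · rw [(hpath i j hij).2 hd] at hlt; simp at hlt
  have hTcard : 2 * k + 1 ≤ T.card := by
    have h := Finset.card_filter_add_card_filter_not
      (s := (Finset.univ : Finset (Fin (2 * k + 2))))
      (fun i : Fin (2 * k + 2) => ∃ u ∈ f i, (u : ℕ) < k)
    rw [Finset.card_univ, Fintype.card_fin] at h
    rw [hT_def]
    omega
  set g : Fin (2 * k + 2) → Fin n := fun i =>
    if h : ∃ u ∈ f i, (u : ℕ) < k then h.choose else sk with hg_def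
  have hg : ∀ i ∈ T, g i ∈ f i ∧ (g i : ℕ) < k := by
    intro i hi
    rw [hT_def, Finset.mem_filter] at hi
    rw [hg_def]
    simp only [dif_pos hi.2]
    exact ⟨hi.2.choose_spec.1, hi.2.choose_spec.2⟩
  have hfib : ∀ b ∈ T.image g, (T.filter (fun i => g i = b)).card ≤ 2 := by
    intro b _
    by_contra hgt
    push_neg at hgt
    obtain ⟨i, hi, j, hj, l, hl, hij, hil, hjl⟩ := Finset.two_lt_card.mp hgt
    rw [Finset.mem_filter] at hi hj hl
    have hbi : b ∈ f i := hi.2 ▸ (hg i hi.1).1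
    have hbj : b ∈ f j := hj.2 ▸ (hg j hj.1).1
    have hbl : b ∈ f l := hl.2 ▸ (hg l hl.1).1
    have a1 := hadj i j hij b hbi hbj
    have a2 := hadj i l hil b hbi hbl
    have a3 := hadj j l hjl b hbj hbl
    have d1 : (i : ℕ) ≠ (j : ℕ) := fun h => hij (Fin.ext h)
    have d2 : (i : ℕ) ≠ (l : ℕ) := fun h => hil (Fin.ext h)
    have d3 : (j : ℕ) ≠ (l : ℕ) := fun h => hjl (Fin.ext h)
    omega
  have himage : (T.image g).card ≤ k := by
    have hsub : T.image g ⊆ Finset.univ.filter (fun u : Fin n => (u : ℕ) < k) := by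
      intro b hb
      obtain ⟨i, hi, rfl⟩ := Finset.mem_image.mp hb
      exact Finset.mem_filter.mpr ⟨Finset.mem_univ _, (hg i hi).2⟩
    calc (T.image g).card ≤ _ := Finset.card_le_card hsub
      _ = k := card_val_lt n k (by omega)
  have := Finset.card_le_mul_card_image T 2 hfib
  omega

theorem S3plus_free_and_min_degree
    (k n : ℕ) (hk : 1 ≤ k) (hn : 2 * k + 5 ≤ n) :
    ¬ HasLinearPath (S3plus n k) (2 * k + 2) ∧
    IsLeast {x : ℚ | ∃ v : Fin n, x = (hdegree (S3plus n k) v : ℚ)}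
      ((k : ℚ) * n - (k : ℚ) ^ 2 / 2 - 3 * (k : ℚ) / 2 + 1) := by
  constructor
  · exact no_path k n hn
  · have key : ((k : ℚ) * n - (k : ℚ) ^ 2 / 2 - 3 * (k : ℚ) / 2 + 1)
        = (((n - 1).choose 2 : ℕ) : ℚ) - (((n - k - 1).choose 2 : ℕ) : ℚ) + 1 := by
      rw [Nat.cast_choose_two, Nat.cast_choose_two]
      have h1 : ((n - 1 : ℕ) : ℚ) = (n : ℚ) - 1 := by
        rw [Nat.cast_sub (by omega)]; norm_num
      have h2 : ((n - k - 1 : ℕ) : ℚ) = (n : ℚ) - k - 1 := by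
        rw [Nat.cast_sub (by omega), Nat.cast_sub (by omega)]; push_cast; ring
      rw [h1, h2]; ring
    constructor
    · refine ⟨⟨k + 2, by omega⟩, ?_⟩
      have hvval : ((⟨k + 2, by omega⟩ : Fin n) : ℕ) = k + 2 := rfl
      have hd := deg_B n k hn ⟨k + 2, by omega⟩ (by rw [hvval]; omega)
      rw [if_neg (by rw [hvval]; omega)] at hd
      have hdq : ((hdegree (S3plus n k) ⟨k + 2, by omega⟩ : ℕ) : ℚ)
          + (((n - k - 1).choose 2 : ℕ) : ℚ) = (((n - 1).choose 2 : ℕ) : ℚ) + 1 := by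
        exact_mod_cast congrArg (fun m : ℕ => (m : ℚ)) hd
      rw [key]; linarith
    · rintro x ⟨v, rfl⟩
      rw [key]
      by_cases hv : (v : ℕ) < k
      · rw [deg_A n k v hv]
        have hch : 1 ≤ (n - k - 1).choose 2 := Nat.choose_pos (by omega)
        have hle : ((n - k - 1).choose 2 : ℚ) ≤ ((n - 1).choose 2 : ℚ) := by
          exact_mod_cast Nat.choose_le_choose 2 (by omega : n - k - 1 ≤ n - 1)
        have hch' : (1 : ℚ) ≤ (((n - k - 1).choose 2 : ℕ) : ℚ) := by exact_mod_cast hch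
        linarith
      · have hd := deg_B n k hn v hv
        by_cases hvc : (v : ℕ) = k ∨ (v : ℕ) = k + 1
        · rw [if_pos hvc] at hd
          have hdq : ((hdegree (S3plus n k) v : ℕ) : ℚ) + (((n - k - 1).choose 2 : ℕ) : ℚ)
              = (((n - 1).choose 2 : ℕ) : ℚ) + ((n - k - 2 : ℕ) : ℚ) := by
            exact_mod_cast congrArg (fun m : ℕ => (m : ℚ)) hd
          have h1 : (1 : ℚ) ≤ ((n - k - 2 : ℕ) : ℚ) := by
            have : 1 ≤ n - k - 2 := by omega
            exact_mod_cast this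
          linarith
        · rw [if_neg hvc] at hd
          have hdq : ((hdegree (S3plus n k) v : ℕ) : ℚ) + (((n - k - 1).choose 2 : ℕ) : ℚ)
              = (((n - 1).choose 2 : ℕ) : ℚ) + 1 := by
            exact_mod_cast congrArg (fun m : ℕ => (m : ℚ)) hd
          linarith
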